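/- arXiv:1604.07453 — 3 statements merged into one kernel-verified Lean document; each statement's English description precedes it below -/
import Mathlib

section
/- Let G be a connected finite simple graph on V ≥ 2 vertices, let λ₁(G) denote the second-smallest eigenvalue of its Laplacian matrix, and let e(G) denote its edge connectivity. Then λ₁(G) ≥ 2·e(G)·(1 − cos(π/V)). -/
open Matrix Finset Real

/-- The second-smallest eigenvalue (counted with multiplicity) of the Laplacian matrix of a
finite simple graph `G`.  Since the constant vector is always an eigenvector of the Laplacian
with eigenvalue `0`, by the Courant–Fischer min-max principle this equals the infimum of the
Rayleigh quotient `⟨x, L x⟩ / ⟨x, x⟩` over nonzero vectors `x` orthogonal to the constants. -/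
noncomputable def SimpleGraph.lambdaOne {V : Type*} [Fintype V] [DecidableEq V]
    (G : SimpleGraph V) [DecidableRel G.Adj] : ℝ :=
  sInf { r : ℝ | ∃ x : V → ℝ, x ≠ 0 ∧ (∑ v, x v) = 0 ∧
    r = (x ⬝ᵥ (G.lapMatrix ℝ *ᵥ x)) / (x ⬝ᵥ x) }

/-- The edge connectivity of a finite simple graph `G`: the minimal number of edges that have
to be removed from `G` to make the resulting graph disconnected. -/
noncomputable def SimpleGraph.edgeConnectivity {V : Type*} [Fintype V]
    (G : SimpleGraph V) : ℕ :=
  sInf { k : ℕ | ∃ F : Finset (Sym2 V), ↑F ⊆ G.edgeSet ∧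
    ¬ (G.deleteEdges ↑F).Connected ∧ F.card = k }

lemma half_sum (f : ℕ → ℕ → ℝ) (hs : ∀ i j, f i j = f j i) (hd : ∀ i, f i i = 0) (n : ℕ) :
    ∑ j ∈ range n, ∑ i ∈ range n, f i j = 2 * ∑ j ∈ range n, ∑ i ∈ range j, f i j := by
  induction n with
  | zero => simp
  | succ n ih =>
    simp only [Finset.sum_range_succ, Finset.sum_add_distrib, ih, hd]
    have : ∑ j ∈ range n, f n j = ∑ i ∈ range n, f i n := by
      exact Finset.sum_congr rfl fun j _ => hs n j
    rw [this]; ring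


lemma sum_ite_lt (a b : ℕ) (hab : a ≤ b) (h : ℕ → ℝ) :
    ∑ i ∈ range b, (if i < a then h i else 0) = ∑ i ∈ range a, h i := by
  rw [Finset.range_eq_Ico, ← Finset.sum_Ico_consecutive _ (Nat.zero_le a) hab,
    ← Finset.range_eq_Ico]
  have h2 : ∑ i ∈ Ico a b, (if i < a then h i else 0) = 0 :=
    Finset.sum_eq_zero (fun i hi => by
      have := Finset.mem_Ico.mp hi
      rw [if_neg (by omega)])
  have h1 : ∑ i ∈ range a, (if i < a then h i else 0) = ∑ i ∈ range a, h i :=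
    Finset.sum_congr rfl (fun i hi => if_pos (Finset.mem_range.mp hi))
  rw [h1, h2, add_zero]

lemma sum_ite_ge (a b : ℕ) (hab : a ≤ b) (h : ℕ → ℝ) :
    ∑ j ∈ range b, (if a ≤ j then h j else 0) = ∑ j ∈ Ico a b, h j := by
  rw [Finset.range_eq_Ico, ← Finset.sum_Ico_consecutive _ (Nat.zero_le a) hab]
  have h1 : ∑ j ∈ Ico 0 a, (if a ≤ j then h j else 0) = 0 :=
    Finset.sum_eq_zero (fun j hj => by
      have := Finset.mem_Ico.mp hj
      rw [if_neg (by omega)])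
  have h2 : ∑ j ∈ Ico a b, (if a ≤ j then h j else 0) = ∑ j ∈ Ico a b, h j :=
    Finset.sum_congr rfl (fun j hj => if_pos (Finset.mem_Ico.mp hj).1)
  rw [h1, h2, zero_add]

lemma discrete_wirtinger (n : ℕ) (hn : 1 ≤ n) (y : ℕ → ℝ)
    (hsum : ∑ i ∈ range n, y i = 0) :
    4 * Real.sin (Real.pi / (2 * n)) ^ 2 * ∑ i ∈ range n, (y i) ^ 2 ≤
      ∑ k ∈ range (n - 1), (y (k + 1) - y k) ^ 2 := by
  have hn0 : (0:ℝ) < n := by exact_mod_cast hn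
  have hn1 : (1:ℝ) ≤ n := by exact_mod_cast hn
  set t : ℝ := Real.pi / (2 * n) with ht
  have htpos : 0 < t := by positivity
  have hs : 0 < Real.sin t := by
    apply Real.sin_pos_of_pos_of_lt_pi htpos
    rw [ht, div_lt_iff₀ (by positivity)]
    nlinarith [Real.pi_pos]
  set s := Real.sin t with hsdef
  set w : ℕ → ℝ := fun k => Real.sin ((2 * (k + 1) : ℕ) * t) with hw
  set c : ℕ → ℝ := fun m => Real.cos ((2 * m + 1 : ℕ) * t) with hc
  set g : ℕ → ℝ := fun j => Real.sin ((2 * j : ℕ) * t) with hg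
  have hwpos : ∀ k, k < n - 1 → 0 < w k := by
    intro k hk
    have hkn : (k:ℝ) + 1 < n := by exact_mod_cast (by omega : k + 1 < n)
    apply Real.sin_pos_of_pos_of_lt_pi
    · positivity
    · rw [ht]
      push_cast
      rw [show 2 * ((k:ℝ) + 1) * (Real.pi / (2 * n)) = ((k:ℝ)+1) * Real.pi / n by ring,
        div_lt_iff₀ hn0]
      nlinarith [Real.pi_pos]
  have hwc : ∀ k : ℕ, 2 * s * w k = c k - c (k + 1) := by
    intro k
    rw [hc, hw]
    simp only []
    rw [Real.cos_sub_cos]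
    push_cast
    have h1 : ((2 * (k:ℝ) + 1) * t + (2 * ((k:ℝ)+1) + 1) * t) / 2 = 2 * ((k:ℝ) + 1) * t := by ring
    have h2 : ((2 * (k:ℝ) + 1) * t - (2 * ((k:ℝ)+1) + 1) * t) / 2 = -t := by ring
    rw [h1, h2, Real.sin_neg]
    ring
  have hcs : ∀ m : ℕ, 2 * s * c m = g (m + 1) - g m := by
    intro m
    rw [hc, hg]
    simp only []
    rw [Real.sin_sub_sin]
    push_cast
    have h1 : ((2 * ((m:ℝ)+1)) * t - (2 * (m:ℝ)) * t) / 2 = t := by ring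
    have h2 : ((2 * ((m:ℝ)+1)) * t + (2 * (m:ℝ)) * t) / 2 = (2 * (m:ℝ) + 1) * t := by ring
    rw [h1, h2]
  set W : ℕ → ℝ := fun m => ∑ k ∈ range m, w k with hW
  set C : ℕ → ℝ := fun m => ∑ i ∈ range m, c i with hC
  have hCval : ∀ m : ℕ, 2 * s * C m = g m := by
    intro m
    calc 2 * s * C m = ∑ i ∈ range m, (2 * s * c i) := by rw [hC]; exact Finset.mul_sum _ _ _
      _ = ∑ i ∈ range m, (g (i+1) - g i) := Finset.sum_congr rfl (fun i _ => hcs i)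
      _ = g m - g 0 := Finset.sum_range_sub g m
      _ = g m := by rw [hg]; norm_num
  have hCw : ∀ k : ℕ, 2 * s * C (k + 1) = w k := by
    intro k
    rw [hCval (k+1), hg, hw]
  have hCn : C n = 0 := by
    have h1 := hCval n
    have h2nt : ((2 * n : ℕ) : ℝ) * t = Real.pi := by
      push_cast [ht]; field_simp
    rw [hg] at h1
    simp only [] at h1
    rw [h2nt, Real.sin_pi] at h1
    nlinarith
  have hWc : ∀ m : ℕ, 2 * s * W m = c 0 - c m := by
    intro m
    calc 2 * s * W m = ∑ k ∈ range m, (2 * s * w k) := by rw [hW]; exact Finset.mul_sum _ _ _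
      _ = ∑ k ∈ range m, (c k - c (k+1)) := Finset.sum_congr rfl (fun k _ => hwc k)
      _ = c 0 - c m := Finset.sum_range_sub' c m
  -- the key cut-sum identity
  have hSk : ∀ k, k < n - 1 →
      4 * s ^ 2 * (∑ j ∈ Ico (k+1) n, ∑ i ∈ range (k+1), (W j - W i)) = n * w k := by
    intro k hk
    have hkn : k + 1 ≤ n := by omega
    have h1 : ∀ j, (2*s) * ∑ i ∈ range (k+1), (W j - W i) = C (k+1) - (k+1) * c j := by
      intro j
      rw [Finset.mul_sum]
      have e1 : ∀ i ∈ range (k+1), 2*s*(W j - W i) = c i - c j := by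
        intro i _
        have hj := hWc j
        have hi := hWc i
        nlinarith [hj, hi]
      rw [Finset.sum_congr rfl e1, Finset.sum_sub_distrib, Finset.sum_const, card_range,
        nsmul_eq_mul, hC]
      push_cast
      ring
    have h2 : ∑ j ∈ Ico (k+1) n, c j = C n - C (k+1) := by
      rw [hC]
      exact Finset.sum_Ico_eq_sub c hkn
    have h3 : (2*s) * ∑ j ∈ Ico (k+1) n, ((2*s) * ∑ i ∈ range (k+1), (W j - W i))
        = (2*s) * ((n - (k+1) : ℕ) * C (k+1) - (k+1) * (C n - C (k+1))) := by
      congr 1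
      rw [Finset.sum_congr rfl (fun j _ => h1 j), Finset.sum_sub_distrib, Finset.sum_const,
        Nat.card_Ico, nsmul_eq_mul, ← Finset.mul_sum, h2]
    have h4 : 4 * s ^ 2 * (∑ j ∈ Ico (k+1) n, ∑ i ∈ range (k+1), (W j - W i))
        = (2*s) * ∑ j ∈ Ico (k+1) n, ((2*s) * ∑ i ∈ range (k+1), (W j - W i)) := by
      rw [Finset.mul_sum, Finset.mul_sum]
      exact Finset.sum_congr rfl (fun j _ => by ring)
    rw [h4, h3, hCn]
    have hcast : ((n - (k+1) : ℕ) : ℝ) = (n : ℝ) - (k+1 : ℝ) := by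
      push_cast [hkn]
      ring
    rw [hcast]
    have := hCw k
    nlinarith [this]
  set d : ℕ → ℝ := fun k => y (k+1) - y k with hd
  set q : ℕ → ℝ := fun k => d k ^ 2 / w k with hq
  -- Step 1: T = n * ∑ y²
  have hT : ∑ j ∈ range n, ∑ i ∈ range j, (y i - y j)^2 = n * ∑ i ∈ range n, (y i)^2 := by
    have h2T := half_sum (fun i j => (y i - y j)^2) (fun i j => by ring) (fun i => by ring) n
    have hfull : ∑ j ∈ range n, ∑ i ∈ range n, (y i - y j)^2
        = 2 * n * ∑ i ∈ range n, (y i)^2 := by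
      have e1 : ∀ j, ∑ i ∈ range n, (y i - y j)^2
          = (∑ i ∈ range n, (y i)^2) - 2 * y j * (∑ i ∈ range n, y i) + n * (y j)^2 := by
        intro j
        have e0 : ∀ i ∈ range n, (y i - y j)^2 = (y i)^2 - 2 * y j * y i + (y j)^2 :=
          fun i _ => by ring
        rw [Finset.sum_congr rfl e0, Finset.sum_add_distrib, Finset.sum_sub_distrib,
          ← Finset.mul_sum, Finset.sum_const, card_range, nsmul_eq_mul]
      rw [Finset.sum_congr rfl (fun j _ => e1 j)]
      simp only [hsum, mul_zero, sub_zero]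
      rw [Finset.sum_add_distrib, Finset.sum_const, card_range, nsmul_eq_mul,
        ← Finset.mul_sum]
      ring
    rw [hfull] at h2T
    linarith
  -- Step 2: pointwise Cauchy-Schwarz
  have hCS : ∀ j ∈ range n, ∀ i ∈ range j,
      (y i - y j)^2 ≤ (W j - W i) * ∑ k ∈ Ico i j, q k := by
    intro j hj i hi
    have hij : i < j := mem_range.mp hi
    have hjn : j < n := mem_range.mp hj
    have hwk : ∀ k ∈ Ico i j, 0 < w k := fun k hk => by
      have := Finset.mem_Ico.mp hk
      exact hwpos k (by omega)
    have tel : ∑ k ∈ Ico i j, d k = y j - y i := by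
      rw [Finset.sum_Ico_eq_sub _ hij.le]
      simp only [hd]
      rw [Finset.sum_range_sub y, Finset.sum_range_sub y]
      ring
    have key := Finset.sum_sq_le_sum_mul_sum_of_sq_eq_mul (Ico i j)
      (r := d) (f := w) (g := q)
      (fun k hk => (hwk k hk).le)
      (fun k hk => by
        have := hwk k hk
        rw [hq]
        positivity)
      (fun k hk => by
        have hwne : w k ≠ 0 := (hwk k hk).ne'
        rw [hq]
        field_simp)
    have hWij : W j - W i = ∑ k ∈ Ico i j, w k := by
      rw [hW]
      exact (Finset.sum_Ico_eq_sub w hij.le).symm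
    calc (y i - y j)^2 = (∑ k ∈ Ico i j, d k)^2 := by rw [tel]; ring
      _ ≤ (∑ k ∈ Ico i j, w k) * ∑ k ∈ Ico i j, q k := key
      _ = (W j - W i) * ∑ k ∈ Ico i j, q k := by rw [hWij]
  -- Step 3: sum interchange
  have hU : ∑ j ∈ range n, ∑ i ∈ range j, ((W j - W i) * ∑ k ∈ Ico i j, q k)
      = ∑ k ∈ range (n-1),
          (q k * ∑ j ∈ Ico (k+1) n, ∑ i ∈ range (k+1), (W j - W i)) := by
    have e1 : ∀ j ∈ range n, ∀ i ∈ range j, (W j - W i) * ∑ k ∈ Ico i j, q k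
        = ∑ k ∈ range (n-1), (if i ≤ k ∧ k < j then (W j - W i) * q k else 0) := by
      intro j hj i hi
      have hij : i < j := mem_range.mp hi
      have hjn : j < n := mem_range.mp hj
      rw [Finset.mul_sum]
      symm
      have e0 : ∀ k, (if i ≤ k ∧ k < j then (W j - W i) * q k else 0)
          = (if k ∈ Ico i j then (W j - W i) * q k else 0) := fun k => by
        simp [Finset.mem_Ico]
      rw [Finset.sum_congr rfl (fun k _ => e0 k), Finset.sum_ite_mem]
      congr 1
      rw [Finset.inter_eq_right]
      intro k hk
      have := Finset.mem_Ico.mp hk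
      exact Finset.mem_range.mpr (by omega)
    rw [Finset.sum_congr rfl (fun j hj => Finset.sum_congr rfl (fun i hi => e1 j hj i hi))]
    rw [Finset.sum_congr rfl (fun j _ => Finset.sum_comm), Finset.sum_comm]
    apply Finset.sum_congr rfl
    intro k hk
    have hkn1 : k < n - 1 := mem_range.mp hk
    have e2 : ∀ j ∈ range n, ∑ i ∈ range j, (if i ≤ k ∧ k < j then (W j - W i) * q k else 0)
        = (if k + 1 ≤ j then ∑ i ∈ range (k+1), ((W j - W i) * q k) else 0) := by
      intro j _
      by_cases hkj : k + 1 ≤ j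
      · rw [if_pos hkj]
        have e3 : ∀ i ∈ range j, (if i ≤ k ∧ k < j then (W j - W i) * q k else 0)
            = (if i < k + 1 then (W j - W i) * q k else 0) := by
          intro i _
          exact if_congr (by omega) rfl rfl
        rw [Finset.sum_congr rfl e3]
        exact sum_ite_lt (k+1) j hkj _
      · rw [if_neg hkj]
        exact Finset.sum_eq_zero (fun i _ => if_neg (by omega))
    rw [Finset.sum_congr rfl e2, sum_ite_ge (k+1) n (by omega) _, Finset.mul_sum]
    apply Finset.sum_congr rfl
    intro j _
    rw [Finset.mul_sum]
    exact Finset.sum_congr rfl (fun i _ => by ring)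
  -- Conclusion
  have hstep : ∑ k ∈ range (n-1),
      (q k * ∑ j ∈ Ico (k+1) n, ∑ i ∈ range (k+1), (W j - W i))
      = ∑ k ∈ range (n-1), n * d k ^ 2 / (4 * s^2) := by
    apply Finset.sum_congr rfl
    intro k hk
    have hk1 := mem_range.mp hk
    have h4 := hSk k hk1
    have hw0 := hwpos k hk1
    have hS : (∑ j ∈ Ico (k+1) n, ∑ i ∈ range (k+1), (W j - W i)) = n * w k / (4 * s^2) := by
      rw [eq_div_iff (by positivity : (4 * s^2:ℝ) ≠ 0)]
      linear_combination h4
    rw [hS]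
    simp only [hq]
    field_simp
  have hchain : n * ∑ i ∈ range n, (y i)^2 ≤ n * (∑ k ∈ range (n-1), d k ^ 2) / (4 * s^2) := by
    rw [← hT]
    calc ∑ j ∈ range n, ∑ i ∈ range j, (y i - y j)^2
        ≤ ∑ j ∈ range n, ∑ i ∈ range j, ((W j - W i) * ∑ k ∈ Ico i j, q k) :=
          Finset.sum_le_sum (fun j hj => Finset.sum_le_sum (fun i hi => hCS j hj i hi))
      _ = ∑ k ∈ range (n-1), n * d k ^ 2 / (4 * s^2) := by rw [hU, hstep]
      _ = n * (∑ k ∈ range (n-1), d k ^ 2) / (4 * s^2) := by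
          rw [Finset.mul_sum, Finset.sum_div]
  have hs2 : (0:ℝ) < 4 * s^2 := by positivity
  have hmul : (n:ℝ) * (4 * s^2 * ∑ i ∈ range n, (y i)^2)
      ≤ n * ∑ k ∈ range (n-1), d k ^ 2 := by
    have := (le_div_iff₀ hs2).mp hchain
    linarith [this]
  have hfin := le_of_mul_le_mul_left hmul hn0
  simpa [hd] using hfin
open SimpleGraph in
lemma rayleigh_bound {V : Type*} [Fintype V] [DecidableEq V]
    (G : SimpleGraph V) [DecidableRel G.Adj] (hV : 2 ≤ Fintype.card V)
    (x : V → ℝ) (hx : (∑ v, x v) = 0) :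
    2 * (G.edgeConnectivity : ℝ) * (1 - Real.cos (Real.pi / Fintype.card V)) * (∑ v, x v ^ 2)
      ≤ x ⬝ᵥ (G.lapMatrix ℝ *ᵥ x) := by
  classical
  set n := Fintype.card V with hn
  have hn1 : 1 ≤ n := by omega
  -- sorted enumeration
  set e0 : Fin n ≃ V := (Fintype.equivFin V).symm with he0
  set σ : Equiv.Perm (Fin n) := Tuple.sort (x ∘ e0) with hσ
  set p : Fin n ≃ V := σ.trans e0 with hp
  have hmono : Monotone (x ∘ p) := by
    have := Tuple.monotone_sort (x ∘ e0)
    exact this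
  set Y : ℕ → ℝ := fun k => if h : k < n then x (p ⟨k, h⟩) else 0 with hYdef
  have hY : ∀ (k : ℕ) (h : k < n), Y k = x (p ⟨k, h⟩) := by
    intro k h
    simp [hYdef, h]
  have hYmono : ∀ a b : ℕ, a ≤ b → b < n → Y a ≤ Y b := by
    intro a b hab hbn
    rw [hY a (lt_of_le_of_lt hab hbn), hY b hbn]
    exact hmono (by exact hab : (⟨a, _⟩ : Fin n) ≤ ⟨b, hbn⟩)
  have hYsum : ∑ i ∈ range n, Y i = 0 := by
    rw [← Fin.sum_univ_eq_sum_range]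
    rw [show ∑ i : Fin n, Y i.val = ∑ i : Fin n, x (p i) from
      Finset.sum_congr rfl (fun i _ => by rw [hY i.val i.isLt])]
    rw [Equiv.sum_comp p x]
    exact hx
  have hYsq : ∑ i ∈ range n, (Y i)^2 = ∑ v, (x v)^2 := by
    rw [← Fin.sum_univ_eq_sum_range]
    rw [show ∑ i : Fin n, (Y i.val)^2 = ∑ i : Fin n, (x (p i))^2 from
      Finset.sum_congr rfl (fun i _ => by rw [hY i.val i.isLt])]
    exact Equiv.sum_comp p (fun v => (x v)^2)
  set pos : V → ℕ := fun v => (p.symm v : ℕ) with hposdef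
  have hposlt : ∀ v, pos v < n := fun v => (p.symm v).isLt
  have hposinj : Function.Injective pos := by
    intro u v huv
    have : p.symm u = p.symm v := Fin.val_injective huv
    exact p.symm.injective this
  have hxY : ∀ v, x v = Y (pos v) := by
    intro v
    rw [hY (pos v) (hposlt v)]
    congr
    simp [hposdef]
  -- crossing edges
  set cross : ℕ → Sym2 V → Prop := fun k s => Sym2.lift
    ⟨fun u v => min (pos u) (pos v) ≤ k ∧ k < max (pos u) (pos v),
     fun u v => by simp [min_comm, max_comm]⟩ s with hcrossdef
  set F : ℕ → Finset (Sym2 V) := fun k => G.edgeFinset.filter (cross k) with hFdef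
  set P : ℕ → Finset (V × V) := fun k =>
    Finset.univ.filter (fun uv => G.Adj uv.1 uv.2 ∧ pos uv.1 ≤ k ∧ k < pos uv.2) with hPdef
  -- edge connectivity lower-bounds each cut
  have hcut : ∀ k, k < n - 1 → G.edgeConnectivity ≤ (F k).card := by
    intro k hk
    apply Nat.sInf_le
    refine ⟨F k, ?_, ?_, rfl⟩
    · intro s hs
      rw [hFdef] at hs
      simp only [Finset.coe_filter, Set.mem_setOf_eq] at hs
      exact (SimpleGraph.mem_edgeFinset).mp hs.1
    · intro hcon
      have hwalklem : ∀ u v : V, (G.deleteEdges ↑(F k)).Walk u v → pos u ≤ k → pos v ≤ k := by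
        intro u v w
        induction w with
        | nil => exact fun h => h
        | cons hadj w ih =>
          rename_i a b cWalk
          intro hak
          apply ih
          rw [SimpleGraph.deleteEdges_adj] at hadj
          by_contra hbk
          push_neg at hbk
          apply hadj.2
          rw [hFdef]
          simp only [Finset.mem_coe, Finset.mem_filter]
          refine ⟨SimpleGraph.mem_edgeFinset.mpr hadj.1, ?_⟩
          rw [hcrossdef]
          simp only [Sym2.lift_mk]
          constructor
          · exact le_trans (min_le_left _ _) hak
          · exact lt_of_lt_of_le hbk (le_max_right _ _)
      have hreach := hcon.preconnected (p ⟨0, by omega⟩) (p ⟨n-1, by omega⟩)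
      obtain ⟨w⟩ := hreach
      have h0 : pos (p ⟨0, by omega⟩) ≤ k := by
        rw [hposdef]
        simp [hp]
      have := hwalklem _ _ w h0
      rw [hposdef] at this
      simp only [Equiv.symm_apply_apply] at this
      omega
  -- crossing edges inject into crossing ordered pairs
  have hFP : ∀ k, (F k).card ≤ (P k).card := by
    intro k
    set f : Sym2 V → V × V := fun s => Sym2.lift
      ⟨fun u v => if pos u ≤ pos v then (u, v) else (v, u), fun u v => by
        rcases lt_trichotomy (pos u) (pos v) with h | h | h
        · simp only [if_pos h.le, if_neg (not_le.mpr h)]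
        · have : u = v := hposinj h
          subst this
          simp
        · simp only [if_neg (not_le.mpr h), if_pos h.le]⟩ s with hfdef
    have hrecover : ∀ s : Sym2 V, s((f s).1, (f s).2) = s := by
      intro s
      induction s with
      | _ u v =>
        rw [hfdef]
        simp only [Sym2.lift_mk]
        by_cases h : pos u ≤ pos v
        · rw [if_pos h]
        · rw [if_neg h]
          exact Sym2.eq_swap
    apply Finset.card_le_card_of_injOn f
    · intro s hs
      rw [hFdef] at hs
      simp only [Finset.mem_coe, Finset.mem_filter] at hs
      obtain ⟨hsedge, hscross⟩ := hs
      induction s with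
      | _ u v =>
        have hadj : G.Adj u v := (SimpleGraph.mem_edgeFinset).mp hsedge
        rw [hcrossdef] at hscross
        simp only [Sym2.lift_mk] at hscross
        have hne : pos u ≠ pos v := fun h => (G.ne_of_adj hadj) (hposinj h)
        rw [hfdef]
        simp only [Sym2.lift_mk]
        rw [hPdef]
        by_cases h : pos u ≤ pos v
        · rw [if_pos h]
          simp only [Finset.mem_coe, Finset.mem_filter, Finset.mem_univ, true_and]
          refine ⟨hadj, ?_, ?_⟩
          · rw [min_eq_left h] at hscross
            exact hscross.1
          · rw [max_eq_right h] at hscross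
            exact hscross.2
        · rw [if_neg h]
          push_neg at h
          simp only [Finset.mem_coe, Finset.mem_filter, Finset.mem_univ, true_and]
          refine ⟨hadj.symm, ?_, ?_⟩
          · rw [min_eq_right h.le] at hscross
            exact hscross.1
          · rw [max_eq_left h.le] at hscross
            exact hscross.2
    · intro s1 hs1 s2 hs2 hf
      have := hrecover s1
      rw [hf, hrecover s2] at this
      exact this.symm
  have hcard : ∀ k ∈ range (n-1), G.edgeConnectivity ≤ (P k).card :=
    fun k hk => le_trans (hcut k (mem_range.mp hk)) (hFP k)
  set D : ℕ → ℝ := fun k => (Y (k+1) - Y k)^2 with hD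
  -- pointwise bound
  have hpoint : ∀ u v : V,
      ∑ k ∈ range (n-1), (if (G.Adj u v ∧ min (pos u) (pos v) ≤ k ∧ k < max (pos u) (pos v))
        then D k else 0) ≤ (if G.Adj u v then (x u - x v)^2 else 0) := by
    intro u v
    by_cases hadj : G.Adj u v
    · rw [if_pos hadj]
      set a := min (pos u) (pos v) with ha
      set b := max (pos u) (pos v) with hb
      have hne : pos u ≠ pos v := fun h => (G.ne_of_adj hadj) (hposinj h)
      have hab : a < b := by
        rw [ha, hb]
        rcases lt_or_gt_of_ne hne with h | h
        · rw [min_eq_left h.le, max_eq_right h.le]; exact h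
        · rw [min_eq_right h.le, max_eq_left h.le]; exact h
      have hbn : b < n := by
        rw [hb]
        exact max_lt (hposlt u) (hposlt v)
      have hconv : ∑ k ∈ range (n-1), (if (G.Adj u v ∧ a ≤ k ∧ k < b) then D k else 0)
          = ∑ k ∈ Ico a b, D k := by
        have e0 : ∀ k, (if (G.Adj u v ∧ a ≤ k ∧ k < b) then D k else 0)
            = (if k ∈ Ico a b then D k else 0) := fun k => by
          simp [Finset.mem_Ico, hadj]
        rw [Finset.sum_congr rfl (fun k _ => e0 k), Finset.sum_ite_mem]
        congr 1
        rw [Finset.inter_eq_right]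
        intro k hk
        have := Finset.mem_Ico.mp hk
        exact Finset.mem_range.mpr (by omega)
      rw [hconv]
      have htel : ∑ k ∈ Ico a b, (Y (k+1) - Y k) = Y b - Y a := by
        rw [Finset.sum_Ico_eq_sub _ hab.le, Finset.sum_range_sub Y, Finset.sum_range_sub Y]
        ring
      have hsq : (x u - x v)^2 = (Y b - Y a)^2 := by
        rw [hxY u, hxY v]
        rcases lt_or_gt_of_ne hne with h | h
        · rw [ha, hb, min_eq_left h.le, max_eq_right h.le]
          all_goals ring
        · rw [ha, hb, min_eq_right h.le, max_eq_left h.le]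
          all_goals ring
      have hnn : ∀ k ∈ Ico a b, 0 ≤ Y (k+1) - Y k := by
        intro k hk
        have hk' := Finset.mem_Ico.mp hk
        have := hYmono k (k+1) (by omega) (by omega)
        linarith
      calc ∑ k ∈ Ico a b, D k = ∑ k ∈ Ico a b, (Y (k+1) - Y k)^2 := rfl
        _ ≤ (∑ k ∈ Ico a b, (Y (k+1) - Y k))^2 := Finset.sum_sq_le_sq_sum_of_nonneg hnn
        _ = (Y b - Y a)^2 := by rw [htel]
        _ = (x u - x v)^2 := hsq.symm
    · rw [if_neg hadj]
      apply le_of_eq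
      exact Finset.sum_eq_zero (fun k _ => if_neg (fun h => hadj h.1))
  -- counting
  have hinner : ∀ k, ∑ u : V, ∑ v : V,
      (if (G.Adj u v ∧ min (pos u) (pos v) ≤ k ∧ k < max (pos u) (pos v)) then D k else 0)
      = ((2 * (P k).card : ℕ) : ℝ) * D k := by
    intro k
    rw [← Finset.sum_product']
    rw [Finset.sum_ite, Finset.sum_const_zero, add_zero, Finset.sum_const, nsmul_eq_mul]
    congr 1
    norm_cast
    rw [Finset.univ_product_univ]
    have hsplit : (Finset.univ.filter (fun z : V × V =>
        G.Adj z.1 z.2 ∧ min (pos z.1) (pos z.2) ≤ k ∧ k < max (pos z.1) (pos z.2)))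
        = P k ∪ (Finset.univ.filter (fun z : V × V =>
            G.Adj z.1 z.2 ∧ pos z.2 ≤ k ∧ k < pos z.1)) := by
      rw [hPdef, ← Finset.filter_or]
      apply Finset.filter_congr
      intro z _
      by_cases hA : G.Adj z.1 z.2 <;> simp [hA] <;> omega
    rw [hsplit, Finset.card_union_of_disjoint, two_mul]
    · congr 1
      apply Finset.card_bij (fun a _ => (a.2, a.1))
      · intro a ha
        simp only [Finset.mem_filter, Finset.mem_univ, true_and] at ha ⊢
        rw [hPdef]
        simp only [Finset.mem_filter, Finset.mem_univ, true_and]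
        exact ⟨ha.1.symm, ha.2.1, ha.2.2⟩
      · intro a _ b _ hab
        have h1 : a.2 = b.2 := congrArg Prod.fst hab
        have h2 : a.1 = b.1 := congrArg Prod.snd hab
        exact Prod.ext h2 h1
      · intro b hb
        rw [hPdef] at hb
        simp only [Finset.mem_filter, Finset.mem_univ, true_and] at hb
        exact ⟨(b.2, b.1), by
          simp only [Finset.mem_filter, Finset.mem_univ, true_and]
          exact ⟨hb.1.symm, hb.2.1, hb.2.2⟩, rfl⟩
    · rw [Finset.disjoint_left]
      intro a ha ha'
      rw [hPdef] at ha
      simp only [Finset.mem_filter, Finset.mem_univ, true_and] at ha ha'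
      omega
  -- quadratic form
  have hquad : x ⬝ᵥ (G.lapMatrix ℝ *ᵥ x)
      = (∑ u : V, ∑ v : V, if G.Adj u v then (x u - x v)^2 else 0) / 2 := by
    rw [← Matrix.toLinearMap₂'_apply', SimpleGraph.lapMatrix_toLinearMap₂']
  have hswap : ∑ u : V, ∑ v : V, (∑ k ∈ range (n-1),
      (if (G.Adj u v ∧ min (pos u) (pos v) ≤ k ∧ k < max (pos u) (pos v)) then D k else 0))
      = ∑ k ∈ range (n-1), ∑ u : V, ∑ v : V,
      (if (G.Adj u v ∧ min (pos u) (pos v) ≤ k ∧ k < max (pos u) (pos v)) then D k else 0) := by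
    rw [Finset.sum_congr rfl (fun u _ => Finset.sum_comm), Finset.sum_comm]
  have hwir := discrete_wirtinger n hn1 Y hYsum
  have hcos : 4 * Real.sin (Real.pi/(2*(n:ℝ)))^2 = 2 * (1 - Real.cos (Real.pi/(n:ℝ))) := by
    have hn0 : (0:ℝ) < n := by positivity
    have h2 := Real.cos_two_mul (Real.pi/(2*(n:ℝ)))
    have harg : 2 * (Real.pi/(2*(n:ℝ))) = Real.pi/(n:ℝ) := by field_simp
    have hsq := Real.sin_sq (Real.pi/(2*(n:ℝ)))
    rw [harg] at h2
    rw [hsq]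
    linarith
  have hepos : (0:ℝ) ≤ (G.edgeConnectivity : ℝ) := Nat.cast_nonneg _
  calc 2 * (G.edgeConnectivity : ℝ) * (1 - Real.cos (Real.pi / (n:ℝ))) * (∑ v, x v ^ 2)
      = (G.edgeConnectivity : ℝ) * (4 * Real.sin (Real.pi/(2*(n:ℝ)))^2 * ∑ i ∈ range n, (Y i)^2) := by
        rw [hYsq, hcos]; ring
    _ ≤ (G.edgeConnectivity : ℝ) * ∑ k ∈ range (n-1), (Y (k+1) - Y k)^2 :=
        mul_le_mul_of_nonneg_left hwir hepos
    _ = ∑ k ∈ range (n-1), (G.edgeConnectivity : ℝ) * D k := by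
        rw [Finset.mul_sum]
    _ ≤ ∑ k ∈ range (n-1), ((P k).card : ℝ) * D k := by
        apply Finset.sum_le_sum
        intro k hk
        apply mul_le_mul_of_nonneg_right _ (sq_nonneg _)
        exact_mod_cast hcard k hk
    _ = (∑ k ∈ range (n-1), ((2 * (P k).card : ℕ) : ℝ) * D k) / 2 := by
        rw [Finset.sum_div]
        apply Finset.sum_congr rfl
        intro k _
        push_cast
        ring
    _ = (∑ k ∈ range (n-1), ∑ u : V, ∑ v : V,
          (if (G.Adj u v ∧ min (pos u) (pos v) ≤ k ∧ k < max (pos u) (pos v)) then D k else 0)) / 2 := by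
        rw [Finset.sum_congr rfl (fun k _ => (hinner k).symm)]
    _ = (∑ u : V, ∑ v : V, (∑ k ∈ range (n-1),
          (if (G.Adj u v ∧ min (pos u) (pos v) ≤ k ∧ k < max (pos u) (pos v)) then D k else 0))) / 2 := by
        rw [hswap]
    _ ≤ (∑ u : V, ∑ v : V, if G.Adj u v then (x u - x v)^2 else 0) / 2 := by
        apply div_le_div_of_nonneg_right ?_ (by norm_num)
        exact Finset.sum_le_sum (fun u _ => Finset.sum_le_sum (fun v _ => hpoint u v))
    _ = x ⬝ᵥ (G.lapMatrix ℝ *ᵥ x) := hquad.symm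


/-- **Fiedler, 1973** (lower bound): for a connected graph on `V ≥ 2` vertices,
`λ₁(G) ≥ 2 e(G) (1 - cos (π / V))`. -/
theorem lambdaOne_ge_edgeConnectivity {V : Type*} [Fintype V] [DecidableEq V]
    (G : SimpleGraph V) [DecidableRel G.Adj]
    (hconn : G.Connected) (hV : 2 ≤ Fintype.card V) :
    G.lambdaOne ≥ 2 * (G.edgeConnectivity : ℝ) *
      (1 - Real.cos (Real.pi / Fintype.card V)) := by
  classical
  rw [SimpleGraph.lambdaOne, ge_iff_le]
  obtain ⟨a, b, hab⟩ := Fintype.exists_pair_of_one_lt_card (by omega : 1 < Fintype.card V)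
  set x0 : V → ℝ := Pi.single a (1:ℝ) - Pi.single b 1 with hx0def
  have hx0ne : x0 ≠ 0 := by
    intro h
    have := congrFun h a
    rw [hx0def] at this
    simp only [Pi.sub_apply, Pi.single_eq_same, Pi.zero_apply,
      Pi.single_eq_of_ne hab] at this
    norm_num at this
  have hx0sum : (∑ v, x0 v) = 0 := by
    simp [hx0def, Finset.sum_sub_distrib]
  have hmem : ((x0 ⬝ᵥ (G.lapMatrix ℝ *ᵥ x0)) / (x0 ⬝ᵥ x0)) ∈
      { r : ℝ | ∃ x : V → ℝ, x ≠ 0 ∧ (∑ v, x v) = 0 ∧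
        r = (x ⬝ᵥ (G.lapMatrix ℝ *ᵥ x)) / (x ⬝ᵥ x) } := ⟨x0, hx0ne, hx0sum, rfl⟩
  apply le_csInf ⟨_, hmem⟩
  rintro r ⟨x, hxne, hxsum, rfl⟩
  have hxx : x ⬝ᵥ x = ∑ v, x v ^ 2 := by
    simp [dotProduct, sq]
  have hxxpos : 0 < x ⬝ᵥ x := by
    rw [hxx]
    obtain ⟨v, hv⟩ := Function.ne_iff.mp hxne
    exact Finset.sum_pos' (fun i _ => sq_nonneg _)
      ⟨v, Finset.mem_univ v, (sq_nonneg (x v)).lt_of_ne (Ne.symm (pow_ne_zero 2 hv))⟩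
  rw [le_div_iff₀ hxxpos, hxx]
  exact rayleigh_bound G hV x hxsum
end

section
/- Let G be a connected finite simple graph on at least 2 vertices, with maximal vertex degree deg_max(G) ≥ 1, let λ₁(G) denote the second-smallest eigenvalue of its Laplacian matrix, and let h(G) denote its Cheeger constant. Then λ₁(G) ≥ h(G)²/(2·deg_max(G)). -/
open Matrix Finset

open Classical in
/-- The set `∂S` of edges of `G` having exactly one endpoint in the vertex set `S`. -/
noncomputable def SimpleGraph.edgeBoundary {V : Type*} [Fintype V] [DecidableEq V]
    (G : SimpleGraph V) [DecidableRel G.Adj] (S : Finset V) : Finset (Sym2 V) :=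
  G.edgeFinset.filter (fun e => ∃ u v, e = s(u, v) ∧ u ∈ S ∧ v ∉ S)

/-- The Cheeger constant of a finite simple graph: the minimum of
`|∂S| / min {|S|, |Sᶜ|}` over all nonempty proper vertex subsets `S`. -/
noncomputable def SimpleGraph.cheegerConstant {V : Type*} [Fintype V] [DecidableEq V]
    (G : SimpleGraph V) [DecidableRel G.Adj] : ℝ :=
  sInf { r : ℝ | ∃ S : Finset V, S.Nonempty ∧ S ≠ Finset.univ ∧
    r = (G.edgeBoundary S).card / (min S.card Sᶜ.card : ℝ) }

namespace CheegerAux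

open SimpleGraph MeasureTheory ENNReal
open scoped ENNReal

set_option linter.unusedSectionVars false

/-! ### List/median auxiliary lemmas -/

lemma countP_lt_le {α : Type*} (l : List α) (m : ℕ) (p : α → Bool)
    (h : ∀ a ∈ l.drop m, ¬ p a) : l.countP p ≤ m := by
  conv_lhs => rw [← List.take_append_drop m l]
  rw [List.countP_append, List.countP_eq_zero.mpr h, Nat.add_zero]
  calc (l.take m).countP p ≤ (l.take m).length := List.countP_le_length
    _ ≤ m := by rw [List.length_take]; omega

lemma countP_gt_le {α : Type*} (l : List α) (m : ℕ) (p : α → Bool)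
    (h : ∀ a ∈ l.take m, ¬ p a) : l.countP p ≤ l.length - m := by
  conv_lhs => rw [← List.take_append_drop m l]
  rw [List.countP_append, List.countP_eq_zero.mpr h, Nat.zero_add]
  calc (l.drop m).countP p ≤ (l.drop m).length := List.countP_le_length
    _ ≤ l.length - m := by rw [List.length_drop]

lemma exists_median {V : Type*} [Fintype V] [DecidableEq V] (x : V → ℝ)
    (hV : 1 ≤ Fintype.card V) :
    ∃ c : ℝ, 2 * (univ.filter fun v => c < x v).card ≤ Fintype.card V ∧
             2 * (univ.filter fun v => x v < c).card ≤ Fintype.card V := by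
  set n := Fintype.card V with hn
  set l := Multiset.sort (Multiset.map x Finset.univ.val) (· ≤ ·) with hldef
  have hsort : l.Pairwise (· ≤ ·) := Multiset.pairwise_sort _ _
  have hlen : l.length = n := by
    rw [hldef, Multiset.length_sort, Multiset.card_map]
    rfl
  have hm : n / 2 < l.length := by rw [hlen]; omega
  set c := l.get ⟨n / 2, hm⟩ with hc
  have hcount : ∀ (p : ℝ → Prop) [DecidablePred p],
      (univ.filter fun v => p (x v)).card = l.countP (fun a => decide (p a)) := by
    intro p _
    have h1 : (univ.filter fun v => p (x v)).card
        = Multiset.countP (fun v => p (x v)) Finset.univ.val := by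
      rw [Multiset.countP_eq_card_filter]; rfl
    have h2 : Multiset.countP (fun v => p (x v)) Finset.univ.val
        = Multiset.countP p (Multiset.map x Finset.univ.val) := by
      rw [Multiset.countP_map, Multiset.countP_eq_card_filter]
    have h3 : Multiset.map x Finset.univ.val = (l : Multiset ℝ) := by
      rw [hldef, Multiset.sort_eq]
    rw [h1, h2, h3, Multiset.coe_countP]
  have h1 : l.countP (fun a => decide (a < c)) ≤ n / 2 := by
    apply countP_lt_le
    intro a ha
    obtain ⟨i, hi, rfl⟩ := List.getElem_of_mem ha
    rw [List.getElem_drop]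
    simp only [decide_eq_true_eq, not_lt]
    rw [List.length_drop] at hi
    exact hsort.rel_get_of_le (a := ⟨n / 2, hm⟩) (b := ⟨n / 2 + i, by omega⟩)
      (Nat.le_add_right _ i)
  have h2 : l.countP (fun a => decide (c < a)) ≤ l.length - (n / 2 + 1) := by
    apply countP_gt_le
    intro a ha
    obtain ⟨i, hi, rfl⟩ := List.getElem_of_mem ha
    rw [List.getElem_take]
    simp only [decide_eq_true_eq, not_lt]
    rw [List.length_take] at hi
    exact hsort.rel_get_of_le (a := ⟨i, by omega⟩) (b := ⟨n / 2, hm⟩) (by simp; omega)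
  rw [hlen] at h2
  refine ⟨c, ?_, ?_⟩
  · rw [hcount (fun a => c < a)]; omega
  · rw [hcount (fun a => a < c)]; omega

lemma ofReal_max (a : ℝ) : ENNReal.ofReal a = ENNReal.ofReal (max a 0) := by
  rcases le_total a 0 with h | h
  · rw [ENNReal.ofReal_of_nonpos h, max_eq_right h, ENNReal.ofReal_zero]
  · rw [max_eq_left h]

lemma lintegral_Ioc_indicator (a b : ℝ) (hb : 0 ≤ b) :
    ∫⁻ t in Set.Ioi (0:ℝ), (Set.Ioc b a).indicator 1 t = ENNReal.ofReal (a - b) := by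
  rw [lintegral_indicator measurableSet_Ioc]
  simp only [Pi.one_apply]
  rw [setLIntegral_one, Measure.restrict_apply measurableSet_Ioc]
  have hss : Set.Ioc b a ∩ Set.Ioi 0 = Set.Ioc b a :=
    Set.inter_eq_left.mpr (fun x hx => lt_of_le_of_lt hb hx.1)
  rw [hss, Real.volume_Ioc]

variable {V : Type*} [Fintype V] [DecidableEq V] (G : SimpleGraph V) [DecidableRel G.Adj]

/-! ### Ordered adjacent pairs -/

def PP : Finset (V × V) := (univ ×ˢ univ).filter fun p => G.Adj p.1 p.2

lemma sum_PP (f : V → V → ℝ) :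
    ∑ p ∈ PP G, f p.1 p.2 = ∑ i, ∑ j, if G.Adj i j then f i j else 0 := by
  rw [PP, sum_filter, Finset.sum_product]

lemma sum_PP_swap (f : V → V → ℝ) :
    ∑ p ∈ PP G, f p.1 p.2 = ∑ p ∈ PP G, f p.2 p.1 := by
  refine Finset.sum_equiv (Equiv.prodComm V V) ?_ ?_ <;> simp [PP, G.adj_comm]

lemma quad_eq (x : V → ℝ) :
    x ⬝ᵥ (G.lapMatrix ℝ *ᵥ x) = (∑ p ∈ PP G, (x p.1 - x p.2) ^ 2) / 2 := by
  rw [← Matrix.toLinearMap₂'_apply', SimpleGraph.lapMatrix_toLinearMap₂' ℝ G x,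
    sum_PP G fun i j => (x i - x j) ^ 2]

lemma sum_PP_deg (F : V → ℝ) :
    ∑ p ∈ PP G, F p.1 = ∑ i, (G.degree i : ℝ) * F i := by
  rw [sum_PP G fun i _ => F i]
  refine Finset.sum_congr rfl fun i _ => ?_
  rw [← Finset.sum_filter, Finset.sum_const, ← neighborFinset_eq_filter, SimpleGraph.degree,
    nsmul_eq_mul]

/-! ### Edge boundary and Cheeger constant facts -/

lemma card_edgeBoundary (S : Finset V) :
    (G.edgeBoundary S).card
      = ((univ ×ˢ univ).filter fun p : V × V => G.Adj p.1 p.2 ∧ p.1 ∈ S ∧ p.2 ∉ S).card := by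
  symm
  refine Finset.card_bij (fun p _ => s(p.1, p.2)) ?_ ?_ ?_
  · rintro ⟨u, v⟩ hp
    simp only [Finset.mem_filter, Finset.mem_product] at hp
    obtain ⟨-, hadj, hu, hv⟩ := hp
    simp only [SimpleGraph.edgeBoundary, Finset.mem_filter, mem_edgeFinset, mem_edgeSet]
    exact ⟨hadj, u, v, rfl, hu, hv⟩
  · rintro ⟨a, b⟩ ha ⟨c, d⟩ hc hab
    simp only [Finset.mem_filter, Finset.mem_product] at ha hc
    rw [Sym2.eq_iff] at hab
    rcases hab with ⟨rfl, rfl⟩ | ⟨rfl, rfl⟩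
    · rfl
    · exact absurd hc.2.2.1 ha.2.2.2
  · intro e he
    simp only [SimpleGraph.edgeBoundary, Finset.mem_filter, mem_edgeFinset, mem_edgeSet] at he
    obtain ⟨he, u, v, rfl, hu, hv⟩ := he
    exact ⟨(u, v), by simpa [hu, hv] using G.mem_edgeSet.mp he, rfl⟩

lemma cheeger_nonneg : 0 ≤ G.cheegerConstant := by
  apply Real.sInf_nonneg
  rintro r ⟨S, -, -, rfl⟩
  positivity

lemma cheeger_le (S : Finset V) (hne : S.Nonempty)
    (hhalf : 2 * S.card ≤ Fintype.card V) :
    G.cheegerConstant * S.card ≤ (G.edgeBoundary S).card := by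
  have hpos : 0 < S.card := hne.card_pos
  have hlt : S.card < Fintype.card V := by omega
  have hSne : S ≠ univ := by
    intro h
    rw [h, Finset.card_univ] at hlt
    exact lt_irrefl _ hlt
  have hcompl : Sᶜ.card = Fintype.card V - S.card := by
    rw [Finset.card_compl]
  have hmin : min S.card Sᶜ.card = S.card := by
    rw [hcompl]; omega
  have hmem : ((G.edgeBoundary S).card / (S.card : ℝ)) ∈
      { r : ℝ | ∃ S : Finset V, S.Nonempty ∧ S ≠ Finset.univ ∧
        r = (G.edgeBoundary S).card / (min S.card Sᶜ.card : ℝ) } :=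
    ⟨S, hne, hSne, by norm_cast; rw [hmin]⟩
  have hbdd : BddBelow { r : ℝ | ∃ S : Finset V, S.Nonempty ∧ S ≠ Finset.univ ∧
      r = (G.edgeBoundary S).card / (min S.card Sᶜ.card : ℝ) } := by
    refine ⟨0, ?_⟩
    rintro r ⟨T, -, -, rfl⟩
    positivity
  have h1 : G.cheegerConstant ≤ (G.edgeBoundary S).card / (S.card : ℝ) := csInf_le hbdd hmem
  have hSpos : (0 : ℝ) < S.card := by exact_mod_cast hpos
  exact (le_div_iff₀ hSpos).mp h1

/-! ### The coarea inequality -/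

lemma coarea (hV : 2 ≤ Fintype.card V) (w : V → ℝ) (hw : ∀ v, 0 ≤ w v)
    (hsupp : 2 * (univ.filter fun v => w v ≠ 0).card ≤ Fintype.card V) :
    G.cheegerConstant * ∑ v, w v ≤ ∑ p ∈ PP G, max (w p.1 - w p.2) 0 := by
  classical
  set h := G.cheegerConstant with hh
  set F1 : ℝ → ℝ≥0∞ := fun t => ∑ v, (Set.Ioc (0:ℝ) (w v)).indicator 1 t with hF1
  set F2 : ℝ → ℝ≥0∞ := fun t => ∑ p ∈ PP G, (Set.Ioc (w p.2) (w p.1)).indicator 1 t with hF2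
  have hmeas1 : ∀ v : V, Measurable fun t => (Set.Ioc (0:ℝ) (w v)).indicator
      (1 : ℝ → ℝ≥0∞) t := fun v => measurable_const.indicator measurableSet_Ioc
  have hmeas2 : ∀ p : V × V, Measurable fun t => (Set.Ioc (w p.2) (w p.1)).indicator
      (1 : ℝ → ℝ≥0∞) t := fun p => measurable_const.indicator measurableSet_Ioc
  have hI1 : ∫⁻ t in Set.Ioi (0:ℝ), F1 t = ENNReal.ofReal (∑ v, w v) := by
    rw [hF1]
    rw [lintegral_finset_sum' _ (fun v _ => (hmeas1 v).aemeasurable)]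
    rw [ENNReal.ofReal_sum_of_nonneg (fun v _ => hw v)]
    refine Finset.sum_congr rfl fun v _ => ?_
    rw [lintegral_Ioc_indicator _ _ le_rfl, sub_zero]
  have hI2 : ∫⁻ t in Set.Ioi (0:ℝ), F2 t
      = ENNReal.ofReal (∑ p ∈ PP G, max (w p.1 - w p.2) 0) := by
    rw [hF2]
    rw [lintegral_finset_sum' _ (fun p _ => (hmeas2 p).aemeasurable)]
    rw [ENNReal.ofReal_sum_of_nonneg (fun p _ => le_max_right _ _)]
    refine Finset.sum_congr rfl fun p _ => ?_
    rw [lintegral_Ioc_indicator _ _ (hw p.2), ofReal_max]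
  have hpt : ∀ t ∈ Set.Ioi (0:ℝ), ENNReal.ofReal h * F1 t ≤ F2 t := by
    intro t ht
    simp only [Set.mem_Ioi] at ht
    set St : Finset V := univ.filter (fun v => t ≤ w v) with hSt
    have hF1t : F1 t = (St.card : ℝ≥0∞) := by
      rw [hF1]
      simp only [Set.indicator_apply, Set.mem_Ioc, Pi.one_apply]
      rw [hSt]
      rw [Finset.card_filter]
      push_cast
      refine Finset.sum_congr rfl fun v _ => ?_
      congr 1
      simp [ht]
    have hF2t : F2 t = (((univ ×ˢ univ).filter
        fun p : V × V => G.Adj p.1 p.2 ∧ p.1 ∈ St ∧ p.2 ∉ St).card : ℝ≥0∞) := by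
      rw [hF2]
      simp only [Set.indicator_apply, Set.mem_Ioc, Pi.one_apply]
      rw [PP, Finset.sum_filter, Finset.card_filter]
      push_cast
      refine Finset.sum_congr rfl fun p _ => ?_
      by_cases hadj : G.Adj p.1 p.2 <;>
        simp [hadj, hSt, not_le, and_comm]
    rcases St.eq_empty_or_nonempty with hSe | hSne
    · rw [hF1t, hSe]
      simp
    · have hsub : St ⊆ univ.filter fun v => w v ≠ 0 := by
        intro v hv
        rw [hSt, Finset.mem_filter] at hv
        rw [Finset.mem_filter]
        refine ⟨Finset.mem_univ v, ?_⟩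
        intro h0
        rw [h0] at hv
        exact absurd hv.2 (not_le.mpr ht)
      have hhalf : 2 * St.card ≤ Fintype.card V :=
        le_trans (by
          have := Finset.card_le_card hsub
          omega) hsupp
      have hch := cheeger_le G St hSne hhalf
      rw [card_edgeBoundary] at hch
      rw [hF1t, hF2t]
      calc ENNReal.ofReal h * (St.card : ℝ≥0∞)
          = ENNReal.ofReal (h * St.card) := by
            rw [ENNReal.ofReal_mul (cheeger_nonneg G), ENNReal.ofReal_natCast]
        _ ≤ ENNReal.ofReal _ := ENNReal.ofReal_le_ofReal hch
        _ = _ := ENNReal.ofReal_natCast _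
  have hmono : ENNReal.ofReal h * ∫⁻ t in Set.Ioi (0:ℝ), F1 t
      ≤ ∫⁻ t in Set.Ioi (0:ℝ), F2 t := by
    rw [← lintegral_const_mul' _ _ ENNReal.ofReal_ne_top]
    refine lintegral_mono_ae ?_
    rw [ae_restrict_iff' measurableSet_Ioi]
    exact Filter.Eventually.of_forall hpt
  rw [hI1, hI2, ← ENNReal.ofReal_mul (cheeger_nonneg G)] at hmono
  exact (ENNReal.ofReal_le_ofReal_iff
    (Finset.sum_nonneg fun p _ => le_max_right _ _)).mp hmono

/-! ### The core Cheeger-type estimate for nonnegative functions -/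

lemma abs_eq_max_add_max (a : ℝ) : |a| = max a 0 + max (-a) 0 := by
  rcases le_total a 0 with h | h
  · rw [abs_of_nonpos h, max_eq_right h, max_eq_left (by linarith), zero_add]
  · rw [abs_of_nonneg h, max_eq_left h, max_eq_right (by linarith), add_zero]

lemma core (hV : 2 ≤ Fintype.card V) (hdeg : 1 ≤ G.maxDegree) (y : V → ℝ)
    (hy : ∀ v, 0 ≤ y v)
    (hsupp : 2 * (univ.filter fun v => y v ≠ 0).card ≤ Fintype.card V) :
    G.cheegerConstant ^ 2 / (2 * (G.maxDegree : ℝ)) * ∑ v, y v ^ 2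
      ≤ (∑ p ∈ PP G, (y p.1 - y p.2) ^ 2) / 2 := by
  classical
  set h := G.cheegerConstant with hh
  set Δ : ℝ := (G.maxDegree : ℝ) with hΔdef
  have hΔpos : (0:ℝ) < Δ := by
    rw [hΔdef]
    exact_mod_cast Nat.lt_of_lt_of_le Nat.zero_lt_one hdeg
  set P : ℝ := ∑ v, y v ^ 2 with hP
  have hPnn : 0 ≤ P := Finset.sum_nonneg fun v _ => sq_nonneg _
  set Q : ℝ := ∑ p ∈ PP G, (y p.1 - y p.2) ^ 2 with hQ
  have hQnn : 0 ≤ Q := Finset.sum_nonneg fun p _ => sq_nonneg _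
  -- coarea applied to w = y²
  have hB : h * P ≤ ∑ p ∈ PP G, max (y p.1 ^ 2 - y p.2 ^ 2) 0 := by
    have := coarea G hV (fun v => y v ^ 2) (fun v => sq_nonneg _)
      (by
        have : (univ.filter fun v => y v ^ 2 ≠ 0) = univ.filter fun v => y v ≠ 0 := by
          refine Finset.filter_congr fun v _ => ?_
          simp [pow_eq_zero_iff]
        rw [this]
        exact hsupp)
    exact this
  set B : ℝ := ∑ p ∈ PP G, max (y p.1 ^ 2 - y p.2 ^ 2) 0 with hBdef
  have hBnn : 0 ≤ B := Finset.sum_nonneg fun p _ => le_max_right _ _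
  -- |y₁² - y₂²| summed is 2B
  have h2B : ∑ p ∈ PP G, |y p.1 ^ 2 - y p.2 ^ 2| = 2 * B := by
    rw [hBdef]
    rw [Finset.sum_congr rfl fun p _ => abs_eq_max_add_max (y p.1 ^ 2 - y p.2 ^ 2)]
    rw [Finset.sum_add_distrib, two_mul]
    congr 1
    have := sum_PP_swap G (fun i j => max (y i ^ 2 - y j ^ 2) 0)
    simp only [neg_sub]
    exact this.symm
  -- Cauchy–Schwarz
  set T : ℝ := ∑ p ∈ PP G, (y p.1 + y p.2) ^ 2 with hT
  have hCS : (∑ p ∈ PP G, |y p.1 ^ 2 - y p.2 ^ 2|) ^ 2 ≤ Q * T := by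
    have heq : ∀ p ∈ PP G, |y p.1 ^ 2 - y p.2 ^ 2|
        = |y p.1 - y p.2| * (y p.1 + y p.2) := by
      intro p _
      rw [show y p.1 ^ 2 - y p.2 ^ 2 = (y p.1 - y p.2) * (y p.1 + y p.2) by ring,
        abs_mul,
        abs_of_nonneg (show (0:ℝ) ≤ y p.1 + y p.2 by have := hy p.1; have := hy p.2; linarith)]
    rw [Finset.sum_congr rfl heq]
    have := Finset.sum_mul_sq_le_sq_mul_sq (PP G)
      (fun p => |y p.1 - y p.2|) (fun p => y p.1 + y p.2)
    simp only [sq_abs] at this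
    exact this
  -- degree bound
  have hTbound : T ≤ 4 * Δ * P := by
    have h1 : T ≤ ∑ p ∈ PP G, 2 * (y p.1 ^ 2 + y p.2 ^ 2) := by
      refine Finset.sum_le_sum fun p _ => ?_
      nlinarith [sq_nonneg (y p.1 - y p.2)]
    have h2 : ∑ p ∈ PP G, 2 * (y p.1 ^ 2 + y p.2 ^ 2)
        = 4 * ∑ p ∈ PP G, y p.1 ^ 2 := by
      have hsw : ∑ p ∈ PP G, y p.2 ^ 2 = ∑ p ∈ PP G, y p.1 ^ 2 :=
        (sum_PP_swap G (fun i j => y j ^ 2))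
      have e1 : ∑ p ∈ PP G, 2 * (y p.1 ^ 2 + y p.2 ^ 2)
          = 2 * (∑ p ∈ PP G, y p.1 ^ 2) + 2 * (∑ p ∈ PP G, y p.2 ^ 2) := by
        rw [Finset.mul_sum, Finset.mul_sum, ← Finset.sum_add_distrib]
        exact Finset.sum_congr rfl fun p _ => by ring
      rw [e1, hsw]
      ring
    have h3 : ∑ p ∈ PP G, y p.1 ^ 2 = ∑ i, (G.degree i : ℝ) * y i ^ 2 :=
      sum_PP_deg G (fun i => y i ^ 2)
    have h4 : ∑ i, (G.degree i : ℝ) * y i ^ 2 ≤ Δ * P := by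
      rw [hP, Finset.mul_sum]
      refine Finset.sum_le_sum fun i _ => ?_
      have hd : (G.degree i : ℝ) ≤ Δ := by
        rw [hΔdef]
        exact_mod_cast G.degree_le_maxDegree i
      exact mul_le_mul_of_nonneg_right hd (sq_nonneg _)
    calc T ≤ ∑ p ∈ PP G, 2 * (y p.1 ^ 2 + y p.2 ^ 2) := h1
      _ = 4 * ∑ p ∈ PP G, y p.1 ^ 2 := h2
      _ = 4 * ∑ i, (G.degree i : ℝ) * y i ^ 2 := by rw [h3]
      _ ≤ 4 * (Δ * P) := by linarith
      _ = 4 * Δ * P := by ring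
  -- combine
  have hTnn : 0 ≤ T := Finset.sum_nonneg fun p _ => sq_nonneg _
  have hkey : (h * P) ^ 2 ≤ Q * Δ * P := by
    have h5 : (h * P) ^ 2 ≤ B ^ 2 := by
      have hhP : 0 ≤ h * P := mul_nonneg (cheeger_nonneg G) hPnn
      nlinarith
    have h6 : (2 * B) ^ 2 ≤ Q * T := by rw [← h2B]; exact hCS
    have h7 : Q * T ≤ Q * (4 * Δ * P) := mul_le_mul_of_nonneg_left hTbound hQnn
    nlinarith
  rw [div_mul_eq_mul_div, div_le_div_iff₀ (by positivity) two_pos]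
  rcases eq_or_lt_of_le hPnn with hP0 | hP0
  · rw [← hP0]
    have : h ^ 2 * 0 * 2 = 0 := by ring
    rw [this]
    positivity
  · nlinarith

end CheegerAux

open CheegerAux MeasureTheory

/-- **Dodziuk 1984, Alon–Milman 1985** (lower bound): for a connected graph on at least two
vertices with maximal degree `deg_max(G) ≥ 1`, `λ₁(G) ≥ h(G)² / (2 deg_max(G))`. -/
theorem lambdaOne_ge_cheeger_sq_div {V : Type*} [Fintype V] [DecidableEq V]
    (G : SimpleGraph V) [DecidableRel G.Adj]
    (hconn : G.Connected) (hV : 2 ≤ Fintype.card V) (hdeg : 1 ≤ G.maxDegree) :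
    G.lambdaOne ≥ G.cheegerConstant ^ 2 / (2 * (G.maxDegree : ℝ)) := by
  classical
  set K : ℝ := G.cheegerConstant ^ 2 / (2 * (G.maxDegree : ℝ)) with hK
  have hΔpos : (0:ℝ) < (G.maxDegree : ℝ) := by
    exact_mod_cast Nat.lt_of_lt_of_le Nat.zero_lt_one hdeg
  have hKnn : 0 ≤ K := by
    rw [hK]; positivity
  rw [SimpleGraph.lambdaOne, ge_iff_le]
  -- nonemptiness of the Rayleigh set
  obtain ⟨u, v, huv⟩ := Fintype.exists_pair_of_one_lt_card (α := V) (by omega)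
  have hne : { r : ℝ | ∃ x : V → ℝ, x ≠ 0 ∧ (∑ v, x v) = 0 ∧
      r = (x ⬝ᵥ (G.lapMatrix ℝ *ᵥ x)) / (x ⬝ᵥ x) }.Nonempty := by
    set x : V → ℝ := fun w => if w = u then 1 else if w = v then -1 else 0 with hx
    refine ⟨_, x, ?_, ?_, rfl⟩
    · intro h0
      have := congrFun h0 u
      simp [hx] at this
    · have : ∑ w, x w = ∑ w, ((if w = u then (1:ℝ) else 0) + (if w = v then -1 else 0)) := by
        refine Finset.sum_congr rfl fun w _ => ?_
        rw [hx]
        by_cases h1 : w = u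
        · subst h1
          simp [huv]
        · simp [h1]
      rw [this, Finset.sum_add_distrib]
      simp
  refine le_csInf hne ?_
  rintro r ⟨x, hx0, hsum, rfl⟩
  -- denominator
  have hxx : x ⬝ᵥ x = ∑ w, x w ^ 2 := by
    simp [dotProduct, sq]
  have hxxpos : 0 < x ⬝ᵥ x := by
    rw [hxx]
    rcases Function.ne_iff.mp hx0 with ⟨w, hw⟩
    have : (0:ℝ) < x w ^ 2 := (sq_nonneg _).lt_of_ne (Ne.symm (pow_ne_zero 2 hw))
    exact Finset.sum_pos' (fun i _ => sq_nonneg _) ⟨w, Finset.mem_univ w, this⟩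
  rw [le_div_iff₀ hxxpos]
  -- median shift
  obtain ⟨c, hc1, hc2⟩ := exists_median (V := V) x (by omega)
  set g : V → ℝ := fun w => x w - c with hg
  set gp : V → ℝ := fun w => max (g w) 0 with hgp
  set gm : V → ℝ := fun w => max (-g w) 0 with hgm
  have hgpnn : ∀ w, 0 ≤ gp w := fun w => le_max_right _ _
  have hgmnn : ∀ w, 0 ≤ gm w := fun w => le_max_right _ _
  -- supports
  have hsuppp : 2 * (univ.filter fun w => gp w ≠ 0).card ≤ Fintype.card V := by
    have : (univ.filter fun w => gp w ≠ 0) = univ.filter fun w => c < x w := by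
      refine Finset.filter_congr fun w _ => ?_
      show max (x w - c) 0 ≠ 0 ↔ c < x w
      constructor
      · intro hne2
        by_contra hle
        push_neg at hle
        exact hne2 (max_eq_right (by linarith))
      · intro hlt h0
        rw [max_eq_left (by linarith)] at h0
        linarith
    rw [this]
    exact hc1
  have hsuppm : 2 * (univ.filter fun w => gm w ≠ 0).card ≤ Fintype.card V := by
    have : (univ.filter fun w => gm w ≠ 0) = univ.filter fun w => x w < c := by
      refine Finset.filter_congr fun w _ => ?_
      show max (-(x w - c)) 0 ≠ 0 ↔ x w < c
      constructor
      · intro hne2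
        by_contra hle
        push_neg at hle
        exact hne2 (max_eq_right (by linarith))
      · intro hlt h0
        rw [max_eq_left (by linarith)] at h0
        linarith
    rw [this]
    exact hc2
  -- key pointwise inequalities
  have hsq : ∀ w, g w ^ 2 = gp w ^ 2 + gm w ^ 2 := by
    intro w
    show g w ^ 2 = max (g w) 0 ^ 2 + max (-g w) 0 ^ 2
    rcases le_total (g w) 0 with h | h
    · rw [max_eq_right h, max_eq_left (by linarith)]
      ring
    · rw [max_eq_left h, max_eq_right (by linarith)]
      ring
  have hterm : ∀ a b : ℝ, (max a 0 - max b 0) ^ 2 + (max (-a) 0 - max (-b) 0) ^ 2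
      ≤ (a - b) ^ 2 := by
    intro a b
    rcases le_total a 0 with ha | ha <;> rcases le_total b 0 with hb | hb
    · rw [max_eq_right ha, max_eq_right hb, max_eq_left (by linarith),
        max_eq_left (by linarith)]
      nlinarith
    · rw [max_eq_right ha, max_eq_left hb, max_eq_left (by linarith),
        max_eq_right (by linarith)]
      nlinarith
    · rw [max_eq_left ha, max_eq_right hb, max_eq_right (by linarith),
        max_eq_left (by linarith)]
      nlinarith
    · rw [max_eq_left ha, max_eq_left hb, max_eq_right (by linarith),
        max_eq_right (by linarith)]
      nlinarith
  -- quadratic forms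
  have hquad : x ⬝ᵥ (G.lapMatrix ℝ *ᵥ x) = (∑ p ∈ PP G, (g p.1 - g p.2) ^ 2) / 2 := by
    rw [quad_eq]
    congr 1
    refine Finset.sum_congr rfl fun p _ => ?_
    rw [hg]
    ring_nf
  have hsplit : (∑ p ∈ PP G, (gp p.1 - gp p.2) ^ 2) + (∑ p ∈ PP G, (gm p.1 - gm p.2) ^ 2)
      ≤ ∑ p ∈ PP G, (g p.1 - g p.2) ^ 2 := by
    rw [← Finset.sum_add_distrib]
    exact Finset.sum_le_sum fun p _ => hterm (g p.1) (g p.2)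
  -- core estimates
  have hcorep := core G hV hdeg gp hgpnn hsuppp
  have hcorem := core G hV hdeg gm hgmnn hsuppm
  -- denominator comparison
  have hgx : ∑ w, x w ^ 2 ≤ ∑ w, g w ^ 2 := by
    have hexp : ∑ w, g w ^ 2
        = ∑ w, x w ^ 2 - 2 * c * (∑ w, x w) + (Fintype.card V : ℝ) * c ^ 2 := by
      have : ∀ w, g w ^ 2 = x w ^ 2 - 2 * c * x w + c ^ 2 := by
        intro w
        rw [hg]
        ring
      rw [Finset.sum_congr rfl fun w _ => this w]
      rw [Finset.sum_add_distrib, Finset.sum_sub_distrib, ← Finset.mul_sum,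
        Finset.sum_const, Finset.card_univ, nsmul_eq_mul]
    rw [hexp, hsum]
    have : (0:ℝ) ≤ (Fintype.card V : ℝ) * c ^ 2 := by positivity
    linarith
  -- assemble
  have hsum2 : ∑ w, g w ^ 2 = ∑ w, gp w ^ 2 + ∑ w, gm w ^ 2 := by
    rw [← Finset.sum_add_distrib]
    exact Finset.sum_congr rfl fun w _ => hsq w
  calc K * (x ⬝ᵥ x) = K * ∑ w, x w ^ 2 := by rw [hxx]
    _ ≤ K * ∑ w, g w ^ 2 := mul_le_mul_of_nonneg_left hgx hKnn
    _ = K * ∑ w, gp w ^ 2 + K * ∑ w, gm w ^ 2 := by rw [hsum2]; ring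
    _ ≤ (∑ p ∈ PP G, (gp p.1 - gp p.2) ^ 2) / 2
        + (∑ p ∈ PP G, (gm p.1 - gm p.2) ^ 2) / 2 := add_le_add hcorep hcorem
    _ ≤ (∑ p ∈ PP G, (g p.1 - g p.2) ^ 2) / 2 := by linarith
    _ = x ⬝ᵥ (G.lapMatrix ℝ *ᵥ x) := hquad.symm
end

section
/- Let G be a connected finite simple graph on at least 2 vertices, let λ₁(G) denote the second-smallest eigenvalue of its Laplacian matrix, and let h(G) denote its Cheeger constant. Then λ₁(G) ≤ 2·h(G). -/
open Matrix Finset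

section aux
variable {V : Type*} [Fintype V] [DecidableEq V] (G : SimpleGraph V) [DecidableRel G.Adj]

open Classical in
lemma card_cross (S : Finset V) :
    (Finset.univ.filter (fun p : V × V => G.Adj p.1 p.2 ∧ p.1 ∈ S ∧ p.2 ∉ S)).card
      = (G.edgeBoundary S).card := by
  apply Finset.card_bij (fun p _ => s(p.1, p.2))
  · rintro ⟨u, v⟩ hp
    simp only [Finset.mem_filter, Finset.mem_univ, true_and] at hp
    simp only [SimpleGraph.edgeBoundary, Finset.mem_filter, SimpleGraph.mem_edgeFinset,
      SimpleGraph.mem_edgeSet]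
    exact ⟨hp.1, u, v, rfl, hp.2.1, hp.2.2⟩
  · rintro ⟨u, v⟩ hp ⟨u', v'⟩ hp' h
    simp only [Finset.mem_filter, Finset.mem_univ, true_and] at hp hp'
    rw [Sym2.eq_iff] at h
    rcases h with ⟨rfl, rfl⟩ | ⟨rfl, rfl⟩
    · rfl
    · exact absurd hp'.2.1 hp.2.2
  · intro e he
    simp only [SimpleGraph.edgeBoundary, Finset.mem_filter, SimpleGraph.mem_edgeFinset,
      SimpleGraph.mem_edgeSet] at he
    obtain ⟨hadj, u, v, rfl, huS, hvS⟩ := he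
    rw [SimpleGraph.mem_edgeSet] at hadj
    exact ⟨(u, v), by simp [hadj, huS, hvS], rfl⟩

open Classical in
lemma card_cross_swap (S : Finset V) :
    (Finset.univ.filter (fun p : V × V => G.Adj p.1 p.2 ∧ p.1 ∉ S ∧ p.2 ∈ S)).card
      = (Finset.univ.filter (fun p : V × V => G.Adj p.1 p.2 ∧ p.1 ∈ S ∧ p.2 ∉ S)).card := by
  apply Finset.card_bij (fun p _ => (p.2, p.1))
  · rintro ⟨u, v⟩ hp
    simp only [Finset.mem_filter, Finset.mem_univ, true_and] at hp ⊢
    exact ⟨hp.1.symm, hp.2.2, hp.2.1⟩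
  · rintro ⟨u, v⟩ _ ⟨u', v'⟩ _ h
    simp only [Prod.mk.injEq] at h
    exact Prod.ext h.2 h.1
  · rintro ⟨u, v⟩ hp
    simp only [Finset.mem_filter, Finset.mem_univ, true_and] at hp
    exact ⟨(v, u), by simp [hp.1.symm, hp.2.1, hp.2.2], rfl⟩

lemma lambdaOne_bddBelow :
    BddBelow { r : ℝ | ∃ x : V → ℝ, x ≠ 0 ∧ (∑ v, x v) = 0 ∧
      r = (x ⬝ᵥ (G.lapMatrix ℝ *ᵥ x)) / (x ⬝ᵥ x) } := by
  refine ⟨0, ?_⟩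
  rintro r ⟨x, -, -, rfl⟩
  apply div_nonneg
  · have := (G.posSemidef_lapMatrix ℝ).dotProduct_mulVec_nonneg x
    simpa [star_trivial] using this
  · exact Finset.sum_nonneg fun v _ => mul_self_nonneg (x v)

lemma key_step (S : Finset V) (hS1 : S.Nonempty) (hS2 : S ≠ Finset.univ) :
    G.lambdaOne ≤ 2 * ((G.edgeBoundary S).card / (min S.card Sᶜ.card : ℝ)) := by
  classical
  set a : ℝ := (S.card : ℝ) with ha_def
  set b : ℝ := ((Sᶜ : Finset V).card : ℝ) with hb_def
  have ha : 0 < a := by rw [ha_def]; exact_mod_cast Finset.card_pos.mpr hS1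
  have hb : 0 < b := by
    rw [hb_def]
    have : (Sᶜ : Finset V).Nonempty :=
      Finset.nonempty_iff_ne_empty.mpr (fun h => hS2 (Finset.compl_eq_empty_iff S |>.mp h))
    exact_mod_cast Finset.card_pos.mpr this
  set x : V → ℝ := fun v => if v ∈ S then b else -a with hx_def
  have hx0 : x ≠ 0 := by
    obtain ⟨v, hv⟩ := hS1
    intro h
    have : x v = 0 := by rw [h]; rfl
    rw [hx_def] at this
    simp only [hv, if_pos] at this
    exact hb.ne' this
  have hfilter : Finset.univ.filter (fun v => v ∈ S) = S := by
    ext v; simp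
  have hfilter' : Finset.univ.filter (fun v => v ∉ S) = Sᶜ := by
    ext v; simp
  have hsum : (∑ v, x v) = 0 := by
    simp only [hx_def, Finset.sum_ite, hfilter, hfilter', Finset.sum_const, nsmul_eq_mul]
    rw [← ha_def, ← hb_def]
    ring
  have hdot : x ⬝ᵥ x = a * b * (a + b) := by
    have : ∀ v, x v * x v = if v ∈ S then b * b else a * a := by
      intro v
      rw [hx_def]
      by_cases h : v ∈ S <;> simp [h] <;> ring
    simp only [dotProduct, this, Finset.sum_ite, hfilter, hfilter', Finset.sum_const,
      nsmul_eq_mul]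
    rw [← ha_def, ← hb_def]
    ring
  set C : ℝ := ((G.edgeBoundary S).card : ℝ) with hC_def
  have hquad : x ⬝ᵥ (G.lapMatrix ℝ *ᵥ x) = C * (a + b) ^ 2 := by
    rw [← Matrix.toLinearMap₂'_apply', SimpleGraph.lapMatrix_toLinearMap₂']
    have hterm : ∀ i j, (if G.Adj i j then (x i - x j) ^ 2 else 0)
        = (if G.Adj i j ∧ i ∈ S ∧ j ∉ S then (a + b) ^ 2 else 0)
          + (if G.Adj i j ∧ i ∉ S ∧ j ∈ S then (a + b) ^ 2 else 0) := by
      intro i j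
      by_cases hadj : G.Adj i j
      · by_cases hi : i ∈ S <;> by_cases hj : j ∈ S <;>
          simp [hx_def, hadj, hi, hj] <;> ring
      · simp [hadj]
    simp only [hterm, Finset.sum_add_distrib]
    rw [← Fintype.sum_prod_type' (f := fun i j =>
        if G.Adj i j ∧ i ∈ S ∧ j ∉ S then (a + b) ^ 2 else 0),
      ← Fintype.sum_prod_type' (f := fun i j =>
        if G.Adj i j ∧ i ∉ S ∧ j ∈ S then (a + b) ^ 2 else 0)]
    rw [show (∑ p : V × V, if G.Adj p.1 p.2 ∧ p.1 ∈ S ∧ p.2 ∉ S then (a + b) ^ 2 else 0)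
        = ((Finset.univ.filter (fun p : V × V => G.Adj p.1 p.2 ∧ p.1 ∈ S ∧ p.2 ∉ S)).card : ℝ)
          * (a + b) ^ 2 by
      rw [Finset.sum_ite, Finset.sum_const, Finset.sum_const_zero, add_zero, nsmul_eq_mul]]
    rw [show (∑ p : V × V, if G.Adj p.1 p.2 ∧ p.1 ∉ S ∧ p.2 ∈ S then (a + b) ^ 2 else 0)
        = ((Finset.univ.filter (fun p : V × V => G.Adj p.1 p.2 ∧ p.1 ∉ S ∧ p.2 ∈ S)).card : ℝ)
          * (a + b) ^ 2 by
      rw [Finset.sum_ite, Finset.sum_const, Finset.sum_const_zero, add_zero, nsmul_eq_mul]]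
    rw [card_cross_swap, card_cross, ← hC_def]
    ring
  have hmem : C * (a + b) ^ 2 / (a * b * (a + b)) ∈
      { r : ℝ | ∃ y : V → ℝ, y ≠ 0 ∧ (∑ v, y v) = 0 ∧
        r = (y ⬝ᵥ (G.lapMatrix ℝ *ᵥ y)) / (y ⬝ᵥ y) } :=
    ⟨x, hx0, hsum, by rw [hquad, hdot]⟩
  have hle : G.lambdaOne ≤ C * (a + b) ^ 2 / (a * b * (a + b)) :=
    csInf_le (lambdaOne_bddBelow G) hmem
  refine hle.trans ?_
  have hC0 : 0 ≤ C := by rw [hC_def]; positivity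
  have hmin : (min S.card Sᶜ.card : ℝ) = min a b := by
    rw [ha_def, hb_def]
  rw [hmin]
  rcases le_total a b with h | h
  · rw [min_eq_left h, show 2 * (C / a) = 2 * C / a by ring,
      div_le_div_iff₀ (by positivity) ha]
    nlinarith [mul_nonneg (mul_nonneg (mul_nonneg hC0 ha.le) (add_pos ha hb).le)
      (sub_nonneg.mpr h)]
  · rw [min_eq_right h, show 2 * (C / b) = 2 * C / b by ring,
      div_le_div_iff₀ (by positivity) hb]
    nlinarith [mul_nonneg (mul_nonneg (mul_nonneg hC0 hb.le) (add_pos ha hb).le)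
      (sub_nonneg.mpr h)]
end aux

/-- **Dodziuk 1984, Alon–Milman 1985** (upper bound): for a connected graph on at least two
vertices, `λ₁(G) ≤ 2 h(G)`. -/
theorem lambdaOne_le_two_cheeger {V : Type*} [Fintype V] [DecidableEq V]
    (G : SimpleGraph V) [DecidableRel G.Adj]
    (hconn : G.Connected) (hV : 2 ≤ Fintype.card V) :
    G.lambdaOne ≤ 2 * G.cheegerConstant := by
  classical
  obtain ⟨u, v, huv⟩ := Fintype.exists_pair_of_one_lt_card (lt_of_lt_of_le one_lt_two hV)
  have hne : ({u} : Finset V) ≠ Finset.univ := by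
    intro h
    have : v ∈ ({u} : Finset V) := h ▸ Finset.mem_univ v
    simp at this
    exact huv this.symm
  have hset : { r : ℝ | ∃ S : Finset V, S.Nonempty ∧ S ≠ Finset.univ ∧
      r = (G.edgeBoundary S).card / (min S.card Sᶜ.card : ℝ) }.Nonempty :=
    ⟨_, {u}, Finset.singleton_nonempty u, hne, rfl⟩
  have hlb : G.lambdaOne / 2 ≤ G.cheegerConstant := by
    apply le_csInf hset
    rintro r ⟨S, hS1, hS2, rfl⟩
    have := key_step G S hS1 hS2
    linarith
  linarith
end
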